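/- Under Assumptions A, B and E (P₂ = 0 and f, g₁, …, g_m convex), let {xᵗ} be generated by SCP_ls, let S = Argmin F, and for each t let λᵗ ∈ ℝ₊ᵐ be a Lagrange multiplier of the t-th subproblem. Then there exist constants γ > 0 and θ ≥ 0 (one may take γ = 1/L_max with L_max an upper bound of {L_fᵗ + ⟨λᵗ, L_gᵗ⟩} and θ = M₀/(c L̲) with M₀ an upper bound of {(L_f − L_fᵗ)₊}) such that for every x̄ ∈ S and every t ≥ 0: (γ + θ)(F(x^{t+1}) − inf F) ≤ (1/2)‖x̄ − xᵗ‖² − (1/2)‖x^{t+1} − x̄‖² + θ(F(xᵗ) − inf F); in particular (1/2)‖x^{t+1} − x̄‖² ≤ (1/2)‖xᵗ − x̄‖² + (γ + θ)(F(xᵗ) − F(x^{t+1})). -/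

import Mathlib

open Set Filter Topology Metric Bornology RealInnerProductSpace
open scoped Classical

noncomputable section

abbrev Euc (n : ℕ) : Type := EuclideanSpace ℝ (Fin n)

/-- Convex subdifferential of a real-valued function on an inner product space. -/
def ConvexSubdiff {H : Type*} [NormedAddCommGroup H] [InnerProductSpace ℝ H]
    (P : H → ℝ) (x : H) : Set H :=
  {ζ | ∀ y, ⟪ζ, y - x⟫ ≤ P y - P x}

/-- Regular (Fréchet) subdifferential of an extended-real-valued function. -/
def RegularSubdiff {H : Type*} [NormedAddCommGroup H] [InnerProductSpace ℝ H]
    (h : H → EReal) (x : H) : Set H :=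
  {ζ | h x ≠ ⊤ ∧ h x ≠ ⊥ ∧ ∀ ε : ℝ, 0 < ε →
    ∀ᶠ z in 𝓝 x,
      (((h x).toReal + ⟪ζ, z - x⟫ - ε * ‖z - x‖ : ℝ) : EReal) ≤ h z}

/-- Limiting (Mordukhovich) subdifferential. -/
def LimSubdiff {H : Type*} [NormedAddCommGroup H] [InnerProductSpace ℝ H]
    (h : H → EReal) (x : H) : Set H :=
  {ζ | ∃ xs ζs : ℕ → H, (∀ k, ζs k ∈ RegularSubdiff h (xs k)) ∧
    Tendsto xs atTop (𝓝 x) ∧ Tendsto (fun k => h (xs k)) atTop (𝓝 (h x)) ∧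
    Tendsto ζs atTop (𝓝 ζ)}

/-- The Kurdyka–Łojasiewicz property with exponent `α` at a point. -/
def KLExpAt {H : Type*} [NormedAddCommGroup H] [InnerProductSpace ℝ H]
    (h : H → EReal) (α : ℝ) (xhat : H) : Prop :=
  ∃ a₀ : ℝ, 0 < a₀ ∧ ∃ a : ℝ, 0 < a ∧ ∃ V ∈ 𝓝 xhat, ∀ x ∈ V,
    h xhat < h x → h x < h xhat + (a : EReal) →
    1 ≤ a₀ * (1 - α) * ((h x).toReal - (h xhat).toReal) ^ (-α) *
        infDist 0 (LimSubdiff h x)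

/-- The general Kurdyka–Łojasiewicz property at a point. -/
def KLAt {H : Type*} [NormedAddCommGroup H] [InnerProductSpace ℝ H]
    (h : H → EReal) (xhat : H) : Prop :=
  ∃ a : ℝ, 0 < a ∧ ∃ V ∈ 𝓝 xhat, ∃ φ φ' : ℝ → ℝ,
    φ 0 = 0 ∧ ContinuousOn φ (Ico 0 a) ∧ ConcaveOn ℝ (Ico 0 a) φ ∧
    (∀ s ∈ Ioo 0 a, HasDerivAt φ (φ' s) s ∧ 0 < φ' s) ∧
    ∀ x ∈ V, h xhat < h x → h x < h xhat + (a : EReal) →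
      1 ≤ φ' ((h x).toReal - (h xhat).toReal) * infDist 0 (LimSubdiff h x)

/-- The extended objective of problem (P). -/
def Fobj {n m : ℕ} (f P1 P2 : Euc n → ℝ) (g : Fin m → Euc n → ℝ) (x : Euc n) : EReal :=
  if ∀ i, g i x ≤ 0 then ((f x + P1 x - P2 x : ℝ) : EReal) else ⊤

/-- The moving balls constraint functions. -/
def barG {n m : ℕ} (g : Fin m → Euc n → ℝ) (g' : Fin m → Euc n → Euc n)
    (x y : Euc n) (w : EuclideanSpace ℝ (Fin m)) (i : Fin m) : ℝ :=
  g i y + ⟪g' i y, x - y⟫ + w i / 2 * ‖x - y‖ ^ 2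

/-- The space `ℝⁿ × ℝⁿ × ℝᵐ` with the (L²) Euclidean inner product. -/
abbrev PS (n m : ℕ) : Type :=
  WithLp 2 (Euc n × WithLp 2 (Euc n × EuclideanSpace ℝ (Fin m)))

/-- The potential function `bar F`. -/
def barF {n m : ℕ} (f P1 P2 : Euc n → ℝ) (g : Fin m → Euc n → ℝ)
    (g' : Fin m → Euc n → Euc n)
    (p : PS n m) : EReal :=
  if ∀ i, barG g g' p.ofLp.1 p.ofLp.2.ofLp.1 p.ofLp.2.ofLp.2 i ≤ 0 then
    ((f p.ofLp.1 + P1 p.ofLp.1 - P2 p.ofLp.1 : ℝ) : EReal) else ⊤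

/-- Stationary points of problem (P). -/
def IsStationaryPt {n m : ℕ} (f P1 P2 : Euc n → ℝ) (f' : Euc n → Euc n)
    (g : Fin m → Euc n → ℝ) (g' : Fin m → Euc n → Euc n) (x : Euc n) : Prop :=
  (∀ i, g i x ≤ 0) ∧ ∃ lam : Fin m → ℝ, (∀ i, 0 ≤ lam i) ∧
    (∀ i, lam i * g i x = 0) ∧
    ∃ u ∈ ConvexSubdiff P1 x, ∃ v ∈ ConvexSubdiff P2 x,
      f' x + u - v + ∑ i, lam i • g' i x = 0

/-- Assumptions A (smoothness, Lipschitz gradients, level-boundedness) and B (MFCQ). -/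
def AssumptionAB {n m : ℕ} (f P1 P2 : Euc n → ℝ) (f' : Euc n → Euc n)
    (g : Fin m → Euc n → ℝ) (g' : Fin m → Euc n → Euc n)
    (Lf : ℝ) (Lg : Fin m → ℝ) : Prop :=
  (∀ x, HasGradientAt f (f' x) x) ∧ LipschitzWith Lf.toNNReal f' ∧
  ConvexOn ℝ univ P1 ∧ Continuous P1 ∧ ConvexOn ℝ univ P2 ∧ Continuous P2 ∧
  (∀ i x, HasGradientAt (g i) (g' i x) x) ∧
  (∀ i, LipschitzWith (Lg i).toNNReal (g' i)) ∧
  {x : Euc n | ∀ i, g i x ≤ 0}.Nonempty ∧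
  (∀ σ : ℝ, IsBounded {x | Fobj f P1 P2 g x ≤ (σ : EReal)}) ∧
  (∀ x : Euc n, (∀ i, g i x ≤ 0) → ∃ d, ∀ i, g i x = 0 → ⟪g' i x, d⟫ < 0)

/-- The sequences generated by the SCP_ls algorithm. -/
structure SCPlsSeq {n m : ℕ} (f P1 P2 : Euc n → ℝ) (f' : Euc n → Euc n)
    (g : Fin m → Euc n → ℝ) (g' : Fin m → Euc n → Euc n)
    (c Llo : ℝ) (x ξ : ℕ → Euc n) (Lfs : ℕ → ℝ)
    (Lgs : ℕ → EuclideanSpace ℝ (Fin m)) : Prop where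
  feas0 : ∀ i, g i (x 0) ≤ 0
  subgrad : ∀ t, ξ t ∈ ConvexSubdiff P2 (x t)
  Lf_lb : ∀ t, Llo ≤ Lfs t
  Lg_lb : ∀ t i, Llo ≤ Lgs t i
  bdd : ∃ M : ℝ, ∀ t, Lfs t ≤ M ∧ ∀ i, Lgs t i ≤ M
  feas_sub : ∀ t i, barG g g' (x (t + 1)) (x t) (Lgs t) i ≤ 0
  min : ∀ t z, (∀ i, barG g g' z (x t) (Lgs t) i ≤ 0) →
    ⟪f' (x t) - ξ t, x (t + 1) - x t⟫ + Lfs t / 2 * ‖x (t + 1) - x t‖ ^ 2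
        + P1 (x (t + 1))
      ≤ ⟪f' (x t) - ξ t, z - x t⟫ + Lfs t / 2 * ‖z - x t‖ ^ 2 + P1 z
  uniq : ∀ t z, (∀ i, barG g g' z (x t) (Lgs t) i ≤ 0) →
    ⟪f' (x t) - ξ t, z - x t⟫ + Lfs t / 2 * ‖z - x t‖ ^ 2 + P1 z
      ≤ ⟪f' (x t) - ξ t, x (t + 1) - x t⟫ + Lfs t / 2 * ‖x (t + 1) - x t‖ ^ 2
        + P1 (x (t + 1)) → z = x (t + 1)
  feas : ∀ t i, g i (x (t + 1)) ≤ 0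
  descent : ∀ t, f (x (t + 1)) + P1 (x (t + 1)) - P2 (x (t + 1)) ≤
    f (x t) + P1 (x t) - P2 (x t) - c / 2 * ‖x (t + 1) - x t‖ ^ 2

/-- Cluster points of a sequence (limits of subsequences). -/
def seqClusterPts {X : Type*} [TopologicalSpace X] (u : ℕ → X) : Set X :=
  {p | ∃ φ : ℕ → ℕ, StrictMono φ ∧ Tendsto (u ∘ φ) atTop (𝓝 p)}


section Stmt13Helpers

lemma line_hasDerivAt {n : ℕ} (f : Euc n → ℝ) (f' : Euc n → Euc n)
    (hf : ∀ z, HasGradientAt f (f' z) z) (y d : Euc n) (s : ℝ) :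
    HasDerivAt (fun t : ℝ => f (y + t • d)) ⟪f' (y + s • d), d⟫ s := by
  have hline : HasDerivAt (fun t : ℝ => y + t • d) d s := by
    simpa using ((hasDerivAt_id s).smul_const d).const_add y
  have h2 := (hf (y + s • d)).hasFDerivAt.comp_hasDerivAt s hline
  simpa [InnerProductSpace.toDual_apply_apply, Function.comp_def] using h2

lemma descent_lemma {n : ℕ} (f : Euc n → ℝ) (f' : Euc n → Euc n) (L : ℝ) (hL : 0 ≤ L)
    (hf : ∀ z, HasGradientAt f (f' z) z) (hlip : LipschitzWith L.toNNReal f')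
    (y p : Euc n) : f p ≤ f y + ⟪f' y, p - y⟫ + L / 2 * ‖p - y‖ ^ 2 := by
  set d := p - y with hd
  have hp : p = y + (1:ℝ) • d := by simp [hd]
  set φ : ℝ → ℝ := fun s => L/2 * s^2 * ‖d‖^2 + s * ⟪f' y, d⟫ - f (y + s • d) with hφ
  have hderiv : ∀ s : ℝ, HasDerivAt φ
      (L * s * ‖d‖^2 + ⟪f' y, d⟫ - ⟪f' (y + s • d), d⟫) s := by
    intro s
    have h1 : HasDerivAt (fun s : ℝ => L/2 * s^2 * ‖d‖^2 + s * ⟪f' y, d⟫)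
        (L * s * ‖d‖^2 + ⟪f' y, d⟫) s := by
      have h2 := (((hasDerivAt_pow 2 s).const_mul (L/2)).mul_const (‖d‖^2)).add
        ((hasDerivAt_id s).mul_const (⟪f' y, d⟫ : ℝ))
      refine h2.congr_deriv ?_
      norm_num
      left
      ring
    exact h1.sub (line_hasDerivAt f f' hf y d s)
  have hmono : MonotoneOn φ (Icc (0:ℝ) 1) := by
    apply monotoneOn_of_deriv_nonneg (convex_Icc 0 1)
    · exact (Differentiable.continuous (fun s => (hderiv s).differentiableAt)).continuousOn
    · exact fun s _ => (hderiv s).differentiableAt.differentiableWithinAt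
    · intro s hs
      rw [interior_Icc, mem_Ioo] at hs
      rw [(hderiv s).deriv]
      have hbnd : ⟪f' (y + s • d), d⟫ - ⟪f' y, d⟫ ≤ L * s * ‖d‖^2 := by
        have h3 : ⟪f' (y + s • d) - f' y, d⟫ ≤ ‖f' (y + s • d) - f' y‖ * ‖d‖ :=
          real_inner_le_norm _ _
        have h4 : ‖f' (y + s • d) - f' y‖ ≤ L * (s * ‖d‖) := by
          have h5 := hlip.dist_le_mul (y + s • d) y
          rw [dist_eq_norm, dist_eq_norm] at h5
          simp only [add_sub_cancel_left] at h5
          rw [norm_smul] at h5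
          calc ‖f' (y + s • d) - f' y‖ ≤ L.toNNReal * (‖(s:ℝ)‖ * ‖d‖) := h5
            _ = L * (|s| * ‖d‖) := by rw [Real.coe_toNNReal L hL, Real.norm_eq_abs]
            _ = L * (s * ‖d‖) := by rw [abs_of_nonneg hs.1.le]
        have h6 : ⟪f' (y + s • d) - f' y, d⟫ = ⟪f' (y + s • d), d⟫ - ⟪f' y, d⟫ :=
          inner_sub_left _ _ _
        nlinarith [norm_nonneg d, norm_nonneg (f' (y + s • d) - f' y), hs.1.le]
      linarith
  have h01 := hmono (left_mem_Icc.2 zero_le_one) (right_mem_Icc.2 zero_le_one) zero_le_one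
  simp only [hφ] at h01
  rw [hp]
  simp only [zero_smul, add_zero, zero_mul, one_mul, zero_pow, mul_zero, one_pow] at h01 ⊢
  linarith

lemma convex_grad_ineq {n : ℕ} (f : Euc n → ℝ) (f' : Euc n → Euc n)
    (hconv : ConvexOn ℝ univ f) (hf : ∀ z, HasGradientAt f (f' z) z)
    (y z : Euc n) : ⟪f' y, z - y⟫ ≤ f z - f y := by
  have hd : HasDerivAt (fun t : ℝ => f (y + t • (z - y))) ⟪f' y, z - y⟫ 0 := by
    simpa using line_hasDerivAt f f' hf y (z - y) 0
  have hslope : Tendsto (slope (fun t : ℝ => f (y + t • (z - y))) 0) (𝓝[>] 0)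
      (𝓝 ⟪f' y, z - y⟫) :=
    (hasDerivAt_iff_tendsto_slope.1 hd).mono_left
      (nhdsWithin_mono _ (fun t ht => ne_of_gt ht))
  refine le_of_tendsto hslope ?_
  filter_upwards [Ioc_mem_nhdsGT_of_mem (by norm_num : (0:ℝ) ∈ Ico 0 1)] with t ht
  have h0 : (0:ℝ) < t := ht.1
  have hc := hconv.2 (mem_univ y) (mem_univ z)
    (by linarith [ht.2] : (0:ℝ) ≤ 1 - t) h0.le (by ring)
  have heq : (1 - t) • y + t • z = y + t • (z - y) := by module
  rw [heq] at hc
  rw [slope_def_field]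
  simp only [zero_smul, add_zero, sub_zero]
  rw [div_le_iff₀ h0]
  simp only [smul_eq_mul] at hc
  nlinarith [hc]

end Stmt13Helpers

set_option maxHeartbeats 4000000 in
/-- the fundamental inequality for SCP_ls in the convex setting. -/
theorem stmt13 {n m : ℕ} (f P1 P2 : Euc n → ℝ) (f' : Euc n → Euc n)
    (g : Fin m → Euc n → ℝ) (g' : Fin m → Euc n → Euc n)
    (Lf : ℝ) (Lg : Fin m → ℝ)
    (hAB : AssumptionAB f P1 P2 f' g g' Lf Lg)
    (hP2 : P2 = fun _ => 0) (hfconv : ConvexOn ℝ univ f)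
    (hgconv : ∀ i, ConvexOn ℝ univ (g i))
    (c Llo : ℝ) (hc : 0 < c) (hLlo : 0 < Llo)
    (x ξ : ℕ → Euc n) (Lfs : ℕ → ℝ) (Lgs : ℕ → EuclideanSpace ℝ (Fin m))
    (hseq : SCPlsSeq f P1 P2 f' g g' c Llo x ξ Lfs Lgs)
    (lam : ℕ → Fin m → ℝ)
    (hlam_nonneg : ∀ t i, 0 ≤ lam t i)
    (hcompl : ∀ t i, lam t i * barG g g' (x (t + 1)) (x t) (Lgs t) i = 0)
    (hfoc : ∀ t, ∃ u ∈ ConvexSubdiff P1 (x (t + 1)),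
      f' (x t) - ξ t + (Lfs t + ∑ i, lam t i * Lgs t i) • (x (t + 1) - x t) + u
        + ∑ i, lam t i • g' i (x t) = 0) :
    ∃ γ : ℝ, 0 < γ ∧ ∃ θ : ℝ, 0 ≤ θ ∧
      ∀ xbar : Euc n, (∀ i, g i xbar ≤ 0) →
        (∀ z, Fobj f P1 P2 g xbar ≤ Fobj f P1 P2 g z) →
        ∀ t : ℕ,
          ((γ + θ) * ((f (x (t + 1)) + P1 (x (t + 1)) - P2 (x (t + 1)))
              - (f xbar + P1 xbar - P2 xbar)) ≤
            1 / 2 * ‖xbar - x t‖ ^ 2 - 1 / 2 * ‖x (t + 1) - xbar‖ ^ 2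
              + θ * ((f (x t) + P1 (x t) - P2 (x t)) - (f xbar + P1 xbar - P2 xbar))) ∧
          (1 / 2 * ‖x (t + 1) - xbar‖ ^ 2 ≤ 1 / 2 * ‖x t - xbar‖ ^ 2
            + (γ + θ) * ((f (x t) + P1 (x t) - P2 (x t))
              - (f (x (t + 1)) + P1 (x (t + 1)) - P2 (x (t + 1))))) := by

  obtain ⟨hf, hflip, hP1conv, hP1cont, _, _, hg, hglip, ⟨w0, hw0⟩, hlevel, hMFCQ⟩ := hAB
  subst hP2
  -- the subgradient of P2 = 0 is zero
  have hxi : ∀ t, ξ t = 0 := by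
    intro t
    have h := hseq.subgrad t (x t + ξ t)
    simp only [add_sub_cancel_left, sub_self] at h
    exact real_inner_self_nonpos.1 (by simpa using h)
  have hfeasall : ∀ t i, g i (x t) ≤ 0 := by
    intro t i
    cases t with
    | zero => exact hseq.feas0 i
    | succ t => exact hseq.feas t i
  have hdes : ∀ t, f (x (t+1)) + P1 (x (t+1)) + c/2 * ‖x (t+1) - x t‖^2
      ≤ f (x t) + P1 (x t) := by
    intro t
    have h := hseq.descent t
    simp only [sub_zero] at h
    linarith
  have hdesnn : ∀ t : ℕ, (0:ℝ) ≤ c/2 * ‖x (t+1) - x t‖^2 := by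
    intro t; positivity
  have hFvmono : ∀ t, f (x (t+1)) + P1 (x (t+1)) ≤ f (x t) + P1 (x t) := by
    intro t; linarith [hdes t, hdesnn t]
  have hFv0 : ∀ t, f (x t) + P1 (x t) ≤ f (x 0) + P1 (x 0) := by
    intro t
    induction t with
    | zero => exact le_refl _
    | succ t ih => exact le_trans (hFvmono t) ih
  have hobj : ∀ t : ℕ, Fobj f P1 (fun _ => 0) g (x t)
      = ((f (x t) + P1 (x t) : ℝ) : EReal) := by
    intro t
    simp only [Fobj]
    rw [if_pos (fun i => hfeasall t i)]
    norm_num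
  obtain ⟨R, hRsub⟩ := (hlevel (f (x 0) + P1 (x 0))).subset_closedBall 0
  have hxR : ∀ t, ‖x t‖ ≤ R := by
    intro t
    have hmem : x t ∈ {z : Euc n | Fobj f P1 (fun _ => 0) g z
        ≤ ((f (x 0) + P1 (x 0) : ℝ) : EReal)} := by
      rw [mem_setOf_eq, hobj t]
      exact_mod_cast hFv0 t
    simpa [mem_closedBall, dist_zero_right] using hRsub hmem
  have hR0 : 0 ≤ R := le_trans (norm_nonneg _) (hxR 0)
  obtain ⟨M, hM⟩ := hseq.bdd
  have hMpos : 0 < M := lt_of_lt_of_le hLlo (le_trans (hseq.Lf_lb 0) (hM 0).1)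
  have hgdiff : ∀ i, Differentiable ℝ (g i) := fun i z => (hg i z).hasFDerivAt.differentiableAt
  have hgcont : ∀ i, Continuous (g i) := fun i => (hgdiff i).continuous
  -- Slater point
  have hslater : ∃ xh : Euc n, ∃ ε : ℝ, 0 < ε ∧ ∀ i, g i xh ≤ -ε := by
    rcases isEmpty_or_nonempty (Fin m) with hm | hm
    · exact ⟨w0, 1, one_pos, fun i => (hm.false i).elim⟩
    · obtain ⟨dv, hdv⟩ := hMFCQ w0 hw0
      have hev : ∀ i : Fin m, ∀ᶠ t : ℝ in 𝓝[>] 0, g i (w0 + t • dv) < 0 := by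
        intro i
        rcases lt_or_eq_of_le (hw0 i) with hlt | heq0
        · have hcz : Continuous (fun t : ℝ => g i (w0 + t • dv)) :=
            (hgcont i).comp (by continuity)
          have h2 : ∀ᶠ t : ℝ in 𝓝 (0:ℝ), g i (w0 + t • dv) < 0 :=
            (hcz.continuousAt (x := (0:ℝ))).eventually_lt continuousAt_const
              (by simpa using hlt)
          exact h2.filter_mono nhdsWithin_le_nhds
        · have hder : HasDerivAt (fun t : ℝ => g i (w0 + t • dv)) ⟪g' i w0, dv⟫ 0 := by
            simpa using line_hasDerivAt (g i) (g' i) (hg i) w0 dv 0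
          have hneg : ⟪g' i w0, dv⟫ < 0 := hdv i heq0
          have hsl : Tendsto (slope (fun t : ℝ => g i (w0 + t • dv)) 0) (𝓝[>] 0)
              (𝓝 ⟪g' i w0, dv⟫) :=
            (hasDerivAt_iff_tendsto_slope.1 hder).mono_left
              (nhdsWithin_mono _ (fun t ht => ne_of_gt ht))
          filter_upwards [hsl (Iio_mem_nhds hneg), self_mem_nhdsWithin] with t hst htpos
          simp only [mem_preimage, mem_Iio] at hst
          have ht0 : (0:ℝ) < t := htpos
          rw [slope_def_field] at hst
          simp only [zero_smul, add_zero, heq0, sub_zero] at hst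
          have h3 := mul_neg_of_neg_of_pos hst ht0
          rw [div_mul_cancel₀ _ (ne_of_gt ht0)] at h3
          linarith [h3]
      have hall : ∀ᶠ t : ℝ in 𝓝[>] (0:ℝ), ∀ i, g i (w0 + t • dv) < 0 :=
        eventually_all.2 hev
      obtain ⟨t0, ht0⟩ := hall.exists
      haveI := hm
      refine ⟨w0 + t0 • dv,
        Finset.univ.inf' Finset.univ_nonempty (fun i => -(g i (w0 + t0 • dv))), ?_, ?_⟩
      · rw [Finset.lt_inf'_iff]
        exact fun i _ => by linarith [ht0 i]
      · intro i
        have h6 := Finset.inf'_le (fun i => -(g i (w0 + t0 • dv))) (Finset.mem_univ i)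
        linarith
  obtain ⟨xh, ε, hε, hgxh⟩ := hslater
  set ρ : ℝ := ‖xh‖ + R with hρdef
  clear_value ρ
  have hρ0 : 0 ≤ ρ := hρdef ▸ add_nonneg (norm_nonneg _) hR0
  set s : ℝ := min 1 (ε / (M * (ρ^2 + 1))) with hsdef
  clear_value s
  have hspos : 0 < s := hsdef ▸ lt_min one_pos (div_pos hε (by positivity))
  have hs1 : s ≤ 1 := hsdef ▸ min_le_left _ _
  have hsε : M * (ρ^2 + 1) * s ≤ ε := by
    have h1 : s ≤ ε / (M * (ρ^2+1)) := hsdef ▸ min_le_right _ _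
    rw [le_div_iff₀ (by positivity)] at h1
    linarith
  set δ : ℝ := s * ε / 2 with hδdef
  clear_value δ
  have hδpos : 0 < δ := by rw [hδdef]; positivity
  set Cf : ℝ := ‖f' 0‖ + Lf.toNNReal * R with hCfdef
  clear_value Cf
  have hCf0 : 0 ≤ Cf := by rw [hCfdef]; positivity
  have hCf : ∀ z : Euc n, ‖z‖ ≤ R → ‖f' z‖ ≤ Cf := by
    intro z hz
    have h1 := hflip.dist_le_mul z 0
    rw [dist_eq_norm, dist_eq_norm, sub_zero] at h1
    have h2 := norm_sub_norm_le (f' z) (f' 0)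
    have h3 : (Lf.toNNReal : ℝ) * ‖z‖ ≤ (Lf.toNNReal : ℝ) * R :=
      mul_le_mul_of_nonneg_left hz (by positivity)
    rw [hCfdef]; linarith
  set R1 : ℝ := max R ‖xh‖ with hR1def
  clear_value R1
  obtain ⟨CP, hCP⟩ := (isCompact_closedBall (0 : Euc n) R1).exists_bound_of_continuousOn
    hP1cont.continuousOn
  have hP1bd : ∀ z : Euc n, ‖z‖ ≤ R1 → |P1 z| ≤ CP := by
    intro z hz
    have := hCP z (by simpa [mem_closedBall, dist_zero_right] using hz)
    rwa [Real.norm_eq_abs] at this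
  have hxhy : ∀ t, ‖xh - x t‖ ≤ ρ := by
    intro t
    refine le_trans (norm_sub_le _ _) ?_
    rw [hρdef]; linarith [hxR t]
  have hzhy : ∀ t, ‖(x t + s • (xh - x t)) - x t‖ ≤ ρ := by
    intro t
    rw [add_sub_cancel_left, norm_smul, Real.norm_eq_abs, abs_of_nonneg hspos.le]
    nlinarith [norm_nonneg (xh - x t), hxhy t]
  have hzhnorm : ∀ t, ‖x t + s • (xh - x t)‖ ≤ R1 := by
    intro t
    have heq2 : x t + s • (xh - x t) = (1-s) • x t + s • xh := by
      rw [sub_smul, one_smul, smul_sub]; abel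
    rw [heq2]
    have h1 : ‖(1-s) • x t + s • xh‖ ≤ ‖(1-s) • x t‖ + ‖s • xh‖ := norm_add_le _ _
    rw [norm_smul, norm_smul, Real.norm_eq_abs, Real.norm_eq_abs,
      abs_of_nonneg (by linarith : (0:ℝ) ≤ 1 - s), abs_of_nonneg hspos.le] at h1
    have h2 : ‖x t‖ ≤ R1 := by rw [hR1def]; exact le_trans (hxR t) (le_max_left _ _)
    have h3 : ‖xh‖ ≤ R1 := by rw [hR1def]; exact le_max_right _ _
    nlinarith [norm_nonneg (x t), norm_nonneg xh]
  have hbarGz : ∀ t i, barG g g' (x t + s • (xh - x t)) (x t) (Lgs t) i ≤ -δ := by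
    intro t i
    have hLgM : Lgs t i ≤ M := (hM t).2 i
    have hLg0 : (0:ℝ) ≤ Lgs t i := le_trans hLlo.le (hseq.Lg_lb t i)
    have hgr : ⟪g' i (x t), xh - x t⟫ ≤ g i xh - g i (x t) :=
      convex_grad_ineq (g i) (g' i) (hgconv i) (hg i) (x t) xh
    have hxd2 : ‖xh - x t‖^2 ≤ ρ^2 := by nlinarith [norm_nonneg (xh - x t), hxhy t]
    have hgy : g i (x t) ≤ 0 := hfeasall t i
    have hgxh2 : g i xh ≤ -ε := hgxh i
    simp only [barG, add_sub_cancel_left, real_inner_smul_right, norm_smul,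
      Real.norm_eq_abs, abs_of_nonneg hspos.le, mul_pow]
    have k1 : s * ⟪g' i (x t), xh - x t⟫ ≤ s * (-ε - g i (x t)) :=
      mul_le_mul_of_nonneg_left (by linarith) hspos.le
    have k2 : Lgs t i / 2 * (s^2 * ‖xh - x t‖^2) ≤ M/2 * (s^2 * ρ^2) := by
      have h7 := mul_le_mul_of_nonneg_left hxd2 (sq_nonneg s)
      calc Lgs t i / 2 * (s^2 * ‖xh - x t‖^2) ≤ M/2 * (s^2 * ‖xh - x t‖^2) :=
            mul_le_mul_of_nonneg_right (by linarith) (by positivity)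
        _ ≤ M/2 * (s^2 * ρ^2) := mul_le_mul_of_nonneg_left h7 (by linarith)
    have k3 : M * (s^2 * ρ^2) ≤ s * ε := by
      have h7 : M * (ρ^2+1) * s * s ≤ ε * s := mul_le_mul_of_nonneg_right hsε hspos.le
      nlinarith [sq_nonneg s, hMpos.le]
    have k4 : (0:ℝ) ≤ (1 - s) * (-(g i (x t))) :=
      mul_nonneg (by linarith) (by linarith)
    rw [hδdef]
    linarith [k1, k2, k3, k4]
  -- the aggregated multipliers and Lagrangian inequality
  set SL : ℕ → ℝ := fun t => ∑ i, lam t i * Lgs t i with hSLdef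
  clear_value SL
  have hSLt : ∀ t, SL t = ∑ i, lam t i * Lgs t i := fun t => by rw [hSLdef]
  have hSLnn : ∀ t, 0 ≤ SL t := fun t => by
    rw [hSLt t]
    exact Finset.sum_nonneg (fun i _ => mul_nonneg (hlam_nonneg t i)
      (le_trans hLlo.le (hseq.Lg_lb t i)))
  have hApos : ∀ t, 0 < Lfs t + SL t := fun t =>
    lt_of_lt_of_le hLlo (le_trans (hseq.Lf_lb t) (by linarith [hSLnn t]))
  have hsumbar : ∀ t z, ∑ i, lam t i * barG g g' z (x t) (Lgs t) i
      = (∑ i, lam t i * g i (x t)) + ⟪∑ i, lam t i • g' i (x t), z - x t⟫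
        + (SL t)/2 * ‖z - x t‖^2 := by
    intro t z
    have h1 : ∀ i : Fin m, lam t i * barG g g' z (x t) (Lgs t) i
        = lam t i * g i (x t) + lam t i * ⟪g' i (x t), z - x t⟫
          + (lam t i * Lgs t i)/2 * ‖z - x t‖^2 := by
      intro i; simp only [barG]; ring
    rw [Finset.sum_congr rfl (fun i _ => h1 i), Finset.sum_add_distrib,
      Finset.sum_add_distrib, sum_inner]
    simp only [real_inner_smul_left]
    rw [hSLt t, Finset.sum_div, Finset.sum_mul]
  have hLag : ∀ t z,
      ⟪f' (x t), x (t+1) - x t⟫ + Lfs t/2 * ‖x (t+1) - x t‖^2 + P1 (x (t+1))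
        + (Lfs t + SL t)/2 * ‖z - x (t+1)‖^2
      ≤ ⟪f' (x t), z - x t⟫ + Lfs t/2 * ‖z - x t‖^2 + P1 z
        + ∑ i, lam t i * barG g g' z (x t) (Lgs t) i := by
    intro t z
    obtain ⟨u, hu, heq⟩ := hfoc t
    rw [hxi t, sub_zero] at heq
    rw [← hSLt t] at heq
    set G : Euc n := ∑ i, lam t i • g' i (x t) with hGdef
    set d : Euc n := x (t+1) - x t with hddef
    have hueq : u = -(f' (x t) + (Lfs t + SL t) • d + G) := by
      apply eq_neg_of_add_eq_zero_right
      rw [← heq]; abel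
    have hcompl_sum : (∑ i, lam t i * g i (x t)) + ⟪G, d⟫ + (SL t)/2 * ‖d‖^2 = 0 := by
      have h0 : ∑ i, lam t i * barG g g' (x (t+1)) (x t) (Lgs t) i = 0 :=
        Finset.sum_eq_zero (fun i _ => hcompl t i)
      rw [hsumbar t (x (t+1))] at h0
      exact h0
    have hzsplit : z - x t = d + (z - x (t+1)) := by rw [hddef]; abel
    have hnorm : ‖z - x t‖^2 = ‖d‖^2 + 2*⟪d, z - x (t+1)⟫ + ‖z - x (t+1)‖^2 := by
      rw [hzsplit, norm_add_sq_real]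
    have hs1' : ⟪f' (x t), z - x t⟫ = ⟪f' (x t), d⟫ + ⟪f' (x t), z - x (t+1)⟫ := by
      rw [hzsplit, inner_add_right]
    have hs2' : ⟪G, z - x t⟫ = ⟪G, d⟫ + ⟪G, z - x (t+1)⟫ := by
      rw [hzsplit, inner_add_right]
    have husub : P1 (x (t+1)) - P1 z ≤ ⟪f' (x t), z - x (t+1)⟫
        + (Lfs t + SL t) * ⟪d, z - x (t+1)⟫ + ⟪G, z - x (t+1)⟫ := by
      have h8 := hu z
      rw [hueq] at h8
      simp only [inner_neg_left, inner_add_left, real_inner_smul_left] at h8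
      linarith
    rw [hsumbar t z, hs1', hs2', hnorm]
    linarith [husub, hcompl_sum]
  -- uniform bound on the multipliers
  set C : ℝ := (Cf * ρ + M/2 * ρ^2 + 2*CP + Cf * (2*R)) / δ with hCdef
  clear_value C
  have hsumlam : ∀ t, ∑ i, lam t i ≤ C := by
    intro t
    have hL := hLag t (x t + s • (xh - x t))
    have h1 : ∑ i, lam t i * barG g g' (x t + s • (xh - x t)) (x t) (Lgs t) i
        ≤ (∑ i, lam t i) * (-δ) := by
      rw [Finset.sum_mul]
      exact Finset.sum_le_sum (fun i _ =>
        mul_le_mul_of_nonneg_left (hbarGz t i) (hlam_nonneg t i))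
    have hfy := hCf (x t) (hxR t)
    have e1 : ⟪f' (x t), (x t + s • (xh - x t)) - x t⟫ ≤ Cf * ρ :=
      le_trans (real_inner_le_norm _ _)
        (mul_le_mul hfy (hzhy t) (norm_nonneg _) hCf0)
    have e2 : -(Cf * (2*R)) ≤ ⟪f' (x t), x (t+1) - x t⟫ := by
      have ha := abs_real_inner_le_norm (f' (x t)) (x (t+1) - x t)
      have hd2 : ‖x (t+1) - x t‖ ≤ 2*R :=
        le_trans (norm_sub_le _ _) (by linarith [hxR (t+1), hxR t])
      have hb := mul_le_mul hfy hd2 (norm_nonneg _) hCf0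
      have hc2 := neg_abs_le (⟪f' (x t), x (t+1) - x t⟫ : ℝ)
      linarith
    have e3 : Lfs t/2 * ‖(x t + s • (xh - x t)) - x t‖^2 ≤ M/2 * ρ^2 := by
      have hq : ‖(x t + s • (xh - x t)) - x t‖^2 ≤ ρ^2 := by
        nlinarith [hzhy t, norm_nonneg ((x t + s • (xh - x t)) - x t)]
      have hh1 : (0:ℝ) ≤ ‖(x t + s • (xh - x t)) - x t‖^2 := sq_nonneg _
      nlinarith [(hM t).1, mul_nonneg (sub_nonneg.2 (hM t).1) hh1,
        mul_nonneg hMpos.le (sub_nonneg.2 hq)]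
    have e4 : |P1 (x t + s • (xh - x t))| ≤ CP := hP1bd _ (hzhnorm t)
    have e5 : |P1 (x (t+1))| ≤ CP := hP1bd _ (by rw [hR1def]; exact le_trans (hxR (t+1)) (le_max_left _ _))
    have e6 : (0:ℝ) ≤ Lfs t/2 * ‖x (t+1) - x t‖^2 :=
      mul_nonneg (by linarith [hseq.Lf_lb t]) (sq_nonneg _)
    have e7 : (0:ℝ) ≤ (Lfs t + SL t)/2 * ‖(x t + s • (xh - x t)) - x (t+1)‖^2 :=
      mul_nonneg (by linarith [hApos t]) (sq_nonneg _)
    have habs1 := abs_le.1 e4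
    have habs2 := abs_le.1 e5
    rw [hCdef, le_div_iff₀ hδpos]
    linarith [hL, h1, e1, e2, e3, e6, e7, habs1.1, habs1.2, habs2.1, habs2.2]
  set Lmax : ℝ := M * (1 + max C 0) with hLmaxdef
  clear_value Lmax
  have hLmaxpos : 0 < Lmax := by rw [hLmaxdef]; nlinarith [le_max_right C 0]
  have hALmax : ∀ t, Lfs t + SL t ≤ Lmax := by
    intro t
    have h1 : SL t ≤ (∑ i, lam t i) * M := by
      rw [hSLt t, Finset.sum_mul]
      exact Finset.sum_le_sum fun i _ =>
        mul_le_mul_of_nonneg_left ((hM t).2 i) (hlam_nonneg t i)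
    have h2 : (∑ i, lam t i) * M ≤ max C 0 * M :=
      mul_le_mul_of_nonneg_right (le_trans (hsumlam t) (le_max_left _ _)) hMpos.le
    have h3 := (hM t).1
    rw [hLmaxdef]
    nlinarith
  have hγpos : (0:ℝ) < 1/Lmax := by rw [one_div]; exact inv_pos.2 hLmaxpos
  have hθ0 : (0:ℝ) ≤ max Lf 0 / (c * Llo) :=
    div_nonneg (le_max_right _ _) (mul_pos hc hLlo).le
  refine ⟨1/Lmax, hγpos, max Lf 0 / (c * Llo), hθ0, ?_⟩
  intro xbar hxbf hxbmin t
  have hlip' : LipschitzWith (max Lf 0).toNNReal f' := by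
    have hNN : (max Lf 0).toNNReal = Lf.toNNReal := by
      apply NNReal.coe_injective
      simp [Real.coe_toNNReal', max_assoc]
    rw [hNN]; exact hflip
  have hFstar : f xbar + P1 xbar ≤ f (x (t+1)) + P1 (x (t+1)) := by
    have h9 := hxbmin (x (t+1))
    rw [show Fobj f P1 (fun _ => 0) g (x (t+1)) = ((f (x (t+1)) + P1 (x (t+1)) : ℝ) : EReal)
        from hobj (t+1)] at h9
    simp only [Fobj] at h9
    rw [if_pos hxbf] at h9
    have h10 := EReal.coe_le_coe_iff.1 h9
    simp only [sub_zero] at h10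
    linarith
  have hKey : f (x (t+1)) + P1 (x (t+1)) ≤ f xbar + P1 xbar
      + (Lfs t + SL t) * (1/2 * ‖xbar - x t‖^2 - 1/2 * ‖xbar - x (t+1)‖^2)
      + (max Lf 0 - Lfs t)/2 * ‖x (t+1) - x t‖^2 := by
    have hL := hLag t xbar
    have hSig : ∑ i, lam t i * barG g g' xbar (x t) (Lgs t) i
        ≤ (SL t)/2 * ‖xbar - x t‖^2 := by
      have h11 : ∀ i : Fin m, lam t i * barG g g' xbar (x t) (Lgs t) i
          ≤ lam t i * (Lgs t i/2 * ‖xbar - x t‖^2) := by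
        intro i
        apply mul_le_mul_of_nonneg_left _ (hlam_nonneg t i)
        have hgr := convex_grad_ineq (g i) (g' i) (hgconv i) (hg i) (x t) xbar
        simp only [barG]
        linarith [hxbf i]
      calc ∑ i, lam t i * barG g g' xbar (x t) (Lgs t) i
          ≤ ∑ i, lam t i * (Lgs t i/2 * ‖xbar - x t‖^2) :=
            Finset.sum_le_sum fun i _ => h11 i
        _ = SL t /2 * ‖xbar - x t‖^2 := by
            rw [hSLt t, Finset.sum_div, Finset.sum_mul]
            exact Finset.sum_congr rfl fun i _ => by ring
    have hdesc := descent_lemma f f' (max Lf 0) (le_max_right _ _) hf hlip' (x t) (x (t+1))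
    have hcvf := convex_grad_ineq f f' hfconv hf (x t) xbar
    linarith [hL, hSig, hdesc, hcvf]
  have hγA : (Lfs t + SL t) * (1/Lmax) ≤ 1 := by
    rw [mul_one_div]
    exact (div_le_one hLmaxpos).2 (hALmax t)
  have hθc : max Lf 0 / c ≤ (max Lf 0 / (c*Llo)) * (Lfs t + SL t) := by
    have h12 : (max Lf 0 / (c*Llo)) * Llo = max Lf 0 / c := by
      field_simp
    calc max Lf 0 / c = (max Lf 0/(c*Llo)) * Llo := h12.symm
      _ ≤ _ := mul_le_mul_of_nonneg_left (by linarith [hseq.Lf_lb t, hSLnn t]) hθ0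
  have hdF1 : 0 ≤ (f (x t) + P1 (x t)) - (f (x (t+1)) + P1 (x (t+1))) := by
    linarith [hdes t, hdesnn t]
  have hdF2 : c/2 * ‖x (t+1) - x t‖^2
      ≤ (f (x t) + P1 (x t)) - (f (x (t+1)) + P1 (x (t+1))) := by
    linarith [hdes t]
  have hMd : (max Lf 0 - Lfs t)/2 * ‖x (t+1) - x t‖^2
      ≤ (max Lf 0)/c * ((f (x t) + P1 (x t)) - (f (x (t+1)) + P1 (x (t+1)))) := by
    have h14 := mul_le_mul_of_nonneg_left hdF2 (div_nonneg (le_max_right Lf 0) hc.le)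
    have h13 : (max Lf 0)/c * (c/2 * ‖x (t+1) - x t‖^2)
        = (max Lf 0)/2 * ‖x (t+1) - x t‖^2 := by
      field_simp
    have h15 : (0:ℝ) ≤ Lfs t/2 * ‖x (t+1) - x t‖^2 :=
      mul_nonneg (by linarith [hseq.Lf_lb t]) (sq_nonneg _)
    linarith
  have he : 0 ≤ (f (x (t+1)) + P1 (x (t+1))) - (f xbar + P1 xbar) := by linarith [hFstar]
  have h16 := mul_le_mul_of_nonneg_right hγA he
  have h17 := mul_le_mul_of_nonneg_right hθc hdF1
  have hstep : (Lfs t + SL t) * ((1/Lmax) * ((f (x (t+1)) + P1 (x (t+1))) - (f xbar + P1 xbar)))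
      ≤ (Lfs t + SL t) * ((1/2 * ‖xbar - x t‖^2 - 1/2 * ‖xbar - x (t+1)‖^2)
        + (max Lf 0/(c*Llo)) * ((f (x t) + P1 (x t)) - (f (x (t+1)) + P1 (x (t+1))))) := by
    nlinarith [hKey, hMd, h16, h17]
  have hmain : (1/Lmax) * ((f (x (t+1)) + P1 (x (t+1))) - (f xbar + P1 xbar))
      ≤ (1/2 * ‖xbar - x t‖^2 - 1/2 * ‖xbar - x (t+1)‖^2)
        + (max Lf 0/(c*Llo)) * ((f (x t) + P1 (x t)) - (f (x (t+1)) + P1 (x (t+1)))) :=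
    (mul_le_mul_iff_right₀ (hApos t)).1 hstep
  have hnrm1 : ‖x (t+1) - xbar‖^2 = ‖xbar - x (t+1)‖^2 := by rw [norm_sub_rev]
  have hnrm2 : ‖x t - xbar‖^2 = ‖xbar - x t‖^2 := by rw [norm_sub_rev]
  have hγe := mul_nonneg hγpos.le he
  have hγd := mul_nonneg hγpos.le hdF1
  constructor
  · simp only [sub_zero]
    nlinarith [hmain, hnrm1, h17]
  · simp only [sub_zero]
    nlinarith [hmain, hnrm1, hnrm2, hγe, hγd]
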